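/- Let Γ be a finite group, B a set with a free Γ-action, k a natural number, and H an unordered k-tuple (multiset of size k) of elements of B. Then the order of the stabilizer subgroup Stab(H) = {γ ∈ Γ : γ·H = H} divides k. -/
import Mathlib

open Multiset

lemma aux_count {Γ : Type*} [Group Γ] {B : Type*} [MulAction Γ B] [DecidableEq B]
    (γ : Γ) (s : Multiset B) (a : B) :
    count a (s.map (fun b => γ • b)) = count (γ⁻¹ • a) s := by
  have h : Function.Injective (fun b : B => γ • b) := MulAction.injective γ
  have := count_map_eq_count' (fun b : B => γ • b) s h (γ⁻¹ • a)
  simpa using this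

lemma aux_dvd {Γ : Type*} [Group Γ] [Fintype Γ] {B : Type*} [MulAction Γ B]
    (hfree : ∀ (γ : Γ) (b : B), γ • b = b → γ = 1)
    (S : Subgroup Γ) :
    ∀ n : ℕ, ∀ H : Multiset B, Multiset.card H = n →
      (∀ γ ∈ S, Multiset.map (fun b => γ • b) H = H) →
      Nat.card S ∣ Multiset.card H := by
  classical
  intro n
  induction n using Nat.strong_induction_on with
  | _ n ih =>
    intro H hcard hinv
    rcases Multiset.empty_or_exists_mem H with rfl | ⟨b, hb⟩
    · simp
    -- orbit of b under S
    set O : Multiset B := Multiset.map (fun s : S => (s : Γ) • b) (Finset.univ : Finset S).val with hOdef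
    have hinj : Function.Injective (fun s : S => (s : Γ) • b) := by
      intro s t hst
      have : ((t : Γ)⁻¹ * s) • b = b := by
        simp only at hst
        rw [mul_smul, hst, ← mul_smul, inv_mul_cancel, one_smul]
      have := hfree _ _ this
      have : (s : Γ) = t := by
        rwa [inv_mul_eq_one, eq_comm] at this
      exact Subtype.ext this
    have hOnodup : O.Nodup := Multiset.Nodup.map hinj (Finset.univ.nodup)
    have hOcard : Multiset.card O = Nat.card S := by
      simp [hOdef, Nat.card_eq_fintype_card]
    have hOsub : O ≤ H := by
      rw [Multiset.le_iff_subset hOnodup]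
      intro a ha
      rw [hOdef, Multiset.mem_map] at ha
      obtain ⟨s, _, rfl⟩ := ha
      have := hinv s s.2
      rw [← this, Multiset.mem_map]
      exact ⟨b, hb, rfl⟩
    have hOinv : ∀ γ ∈ S, Multiset.map (fun x => γ • x) O = O := by
      intro γ hγ
      rw [hOdef, Multiset.map_map]
      have := Multiset.map_map (fun s : S => (s : Γ) • b)
        (fun s : S => (⟨γ, hγ⟩ : S) * s) (Finset.univ : Finset S).val
      have hperm : Multiset.map (fun s : S => (⟨γ, hγ⟩ : S) * s) (Finset.univ : Finset S).val
          = (Finset.univ : Finset S).val := by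
        have : Finset.image (fun s : S => (⟨γ, hγ⟩ : S) * s) Finset.univ = Finset.univ := by
          apply Finset.eq_univ_of_forall
          intro x
          rw [Finset.mem_image]
          exact ⟨(⟨γ, hγ⟩ : S)⁻¹ * x, Finset.mem_univ _, by group⟩
        have hinj2 : Function.Injective (fun s : S => (⟨γ, hγ⟩ : S) * s) :=
          mul_right_injective _
        calc Multiset.map (fun s : S => (⟨γ, hγ⟩ : S) * s) (Finset.univ : Finset S).val
            = (Finset.image (fun s : S => (⟨γ, hγ⟩ : S) * s) Finset.univ).val := by
              rw [Finset.image_val, Multiset.dedup_eq_self.mpr]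
              exact Multiset.Nodup.map hinj2 Finset.univ.nodup
          _ = (Finset.univ : Finset S).val := by rw [this]
      conv_rhs => rw [← hperm]
      rw [← Multiset.map_map]
      ext s
      simp [mul_smul]
    have hHOinv : ∀ γ ∈ S, Multiset.map (fun x => γ • x) (H - O) = H - O := by
      intro γ hγ
      ext a
      rw [aux_count, Multiset.count_sub, Multiset.count_sub,
        ← aux_count γ H a, ← aux_count γ O a, hinv γ hγ, hOinv γ hγ]
    have hOne : O ≠ 0 := by
      rw [hOdef]
      simp [Finset.univ_nonempty.ne_empty, ← Multiset.card_pos, Nat.card_eq_fintype_card,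
        Fintype.card_pos]
    have hcardsub : Multiset.card (H - O) = Multiset.card H - Multiset.card O :=
      Multiset.card_sub hOsub
    have hOpos : 0 < Multiset.card O := Multiset.card_pos.mpr hOne
    have hlt : Multiset.card (H - O) < n := by
      rw [hcardsub, hcard]
      have : 0 < n := hcard ▸ (Multiset.card_pos.mpr (by rintro rfl; simp at hb))
      omega
    have hdvd := ih _ hlt (H - O) rfl hHOinv
    have hle : Multiset.card O ≤ Multiset.card H := Multiset.card_le_card hOsub
    have : Multiset.card H = Multiset.card (H - O) + Nat.card S := by
      rw [hcardsub, ← hOcard]; omega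
    rw [this]
    exact Nat.dvd_add hdvd dvd_rfl

theorem stmt0 (Γ : Type*) [Group Γ] [Fintype Γ] (B : Type*) [MulAction Γ B]
    (hfree : ∀ (γ : Γ) (b : B), γ • b = b → γ = 1)
    (k : ℕ) (H : Multiset B) (hH : Multiset.card H = k) :
    Nat.card {γ : Γ // Multiset.map (fun b => γ • b) H = H} ∣ k := by
  classical
  let S : Subgroup Γ :=
    { carrier := {γ : Γ | Multiset.map (fun b => γ • b) H = H}
      one_mem' := by simp
      mul_mem' := by
        intro a c ha hc
        simp only [Set.mem_setOf_eq] at *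
        rw [show (fun b => (a * c) • b) = (fun b => a • b) ∘ (fun b => c • b) from
          funext fun b => mul_smul a c b, ← Multiset.map_map, hc, ha]
      inv_mem' := by
        intro a ha
        simp only [Set.mem_setOf_eq] at *
        conv_lhs => rw [← ha]
        rw [Multiset.map_map]
        simp }
  have : Nat.card {γ : Γ // Multiset.map (fun b => γ • b) H = H} = Nat.card S := rfl
  rw [this, ← hH]
  exact aux_dvd hfree S (Multiset.card H) H rfl (fun γ hγ => hγ)
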